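/- For every real number θ, the Lobachevsky function satisfies -∫_0^θ log|2 sin t| dt = (1/2) Σ_{n=1}^∞ sin(2nθ)/n², where the series converges absolutely. -/

import Mathlib

open Real MeasureTheory Filter Topology intervalIntegral

-- |log t| ≤ 2 √t + 2 / √t for t > 0
lemma abs_log_le {t : ℝ} (ht : 0 < t) :
    |Real.log t| ≤ 2 * t ^ (1/2 : ℝ) + 2 * t ^ (-(1/2) : ℝ) := by
  have h1 : Real.log t = 2 * Real.log (t ^ (1/2 : ℝ)) := by
    rw [Real.log_rpow ht]; ring
  have h2 : -Real.log t = 2 * Real.log (t ^ (-(1/2) : ℝ)) := by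
    rw [Real.log_rpow ht]; ring
  have p1 : (0:ℝ) < t ^ (1/2 : ℝ) := Real.rpow_pos_of_pos ht _
  have p2 : (0:ℝ) < t ^ (-(1/2) : ℝ) := Real.rpow_pos_of_pos ht _
  have b1 : Real.log (t ^ (1/2 : ℝ)) ≤ t ^ (1/2 : ℝ) :=
    (Real.log_le_sub_one_of_pos p1).trans (by linarith)
  have b2 : Real.log (t ^ (-(1/2) : ℝ)) ≤ t ^ (-(1/2) : ℝ) :=
    (Real.log_le_sub_one_of_pos p2).trans (by linarith)
  rcases abs_cases (Real.log t) with ⟨h, _⟩ | ⟨h, _⟩ <;> rw [h] <;> nlinarith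

lemma ii_log_abs (a b : ℝ) :
    IntervalIntegrable (fun t => Real.log |t|) volume a b := by
  have key : ∀ c : ℝ, 0 ≤ c → IntervalIntegrable (fun t => Real.log |t|) volume 0 c := by
    intro c hc
    rw [intervalIntegrable_iff, Set.uIoc_of_le hc]
    have hbound : IntegrableOn (fun t : ℝ => 2 * t ^ (1/2 : ℝ) + 2 * t ^ (-(1/2) : ℝ))
        (Set.Ioc 0 c) volume := by
      have h1 : IntervalIntegrable (fun t : ℝ => t ^ (1/2 : ℝ)) volume 0 c :=
        intervalIntegral.intervalIntegrable_rpow' (by norm_num)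
      have h2 : IntervalIntegrable (fun t : ℝ => t ^ (-(1/2) : ℝ)) volume 0 c :=
        intervalIntegral.intervalIntegrable_rpow' (by norm_num)
      have := (h1.const_mul 2).add (h2.const_mul 2)
      rw [intervalIntegrable_iff, Set.uIoc_of_le hc] at this
      exact this
    refine Integrable.mono hbound ?_ ?_
    · exact (Real.measurable_log.comp measurable_abs).aestronglyMeasurable
    · filter_upwards [ae_restrict_mem measurableSet_Ioc] with t ht
      have ht0 : 0 < t := ht.1
      rw [Real.norm_eq_abs, Real.norm_eq_abs, abs_of_pos ht0]
      exact (abs_log_le ht0).trans (le_abs_self _)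
  have key2 : ∀ c : ℝ, IntervalIntegrable (fun t => Real.log |t|) volume 0 c := by
    intro c
    rcases le_total 0 c with hc | hc
    · exact key c hc
    · have := (key (-c) (by linarith))
      have h2 := (IntervalIntegrable.iff_comp_neg (by simp)).mp this
      simp only [abs_neg, neg_zero, neg_neg] at h2
      exact h2.symm.symm
  exact (key2 a).symm.trans (key2 b)

lemma abs_sin_ge {u : ℝ} (hu : |u| ≤ π/2) : 2/π * |u| ≤ |Real.sin u| := by
  wlog h : 0 ≤ u generalizing u
  · have := this (u := -u) (by rwa [abs_neg]) (by linarith [lt_of_not_ge h])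
    simpa [abs_neg] using this
  have hu2 : u ≤ π/2 := (le_abs_self u).trans hu
  have h2 := Real.mul_le_sin h hu2
  rw [abs_of_nonneg h]
  exact h2.trans (le_abs_self _)

lemma ii_log_abs_sin (a b : ℝ) :
    IntervalIntegrable (fun t => Real.log |Real.sin t|) volume a b := by
  have hloc : LocallyIntegrable (fun t => Real.log |Real.sin t|) volume := by
    intro x
    by_cases hx : Real.sin x = 0
    · obtain ⟨k, hk⟩ := Real.sin_eq_zero_iff.mp hx
      refine ⟨Set.Ioo (x - π/2) (x + π/2),
        Ioo_mem_nhds (by linarith [Real.pi_pos]) (by linarith [Real.pi_pos]), ?_⟩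
      have h1 : IntervalIntegrable (fun t : ℝ => Real.log (π/2) - Real.log |t - x|)
          volume (x - π/2) (x + π/2) := by
        have h0 := (ii_log_abs (-(π/2)) (π/2)).comp_sub_right x
        have e1 : x - π/2 = -(π/2) + x := by ring
        have e2 : x + π/2 = π/2 + x := by ring
        rw [e1, e2]
        exact intervalIntegrable_const.sub h0
      have hbound : IntegrableOn (fun t : ℝ => Real.log (π/2) - Real.log |t - x|)
          (Set.Ioo (x - π/2) (x + π/2)) volume := by
        rw [intervalIntegrable_iff, Set.uIoc_of_le (by linarith [Real.pi_pos])] at h1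
        exact h1.mono_set Set.Ioo_subset_Ioc_self
      refine Integrable.mono hbound ((Real.measurable_log.comp
        (measurable_abs.comp Real.measurable_sin)).aestronglyMeasurable) ?_
      filter_upwards [ae_restrict_mem measurableSet_Ioo] with t ht
      rw [Real.norm_eq_abs, Real.norm_eq_abs]
      have hpi1 : (1:ℝ) ≤ π/2 := by linarith [Real.pi_gt_three]
      by_cases htx : t = x
      · subst htx
        rw [hx]
        simp only [abs_zero, Real.log_zero]
        positivity
      · have hux : |t - x| ≤ π/2 := by
          rw [abs_le]; constructor
          · linarith [ht.1]
          · linarith [ht.2]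
        have hsin_eq : |Real.sin t| = |Real.sin (t - x)| := by
          have ht' : t = (t - x) + x := by ring
          nth_rewrite 1 [ht']
          rw [← hk, Real.sin_add_int_mul_pi, abs_mul]
          rcases Int.even_or_odd k with he | ho
          · rw [he.neg_one_zpow]; simp
          · rw [ho.neg_one_zpow]; simp
        have hpos : 0 < |t - x| := abs_pos.mpr (sub_ne_zero.mpr htx)
        have hge : 2/π * |t - x| ≤ |Real.sin t| := by
          rw [hsin_eq]; exact abs_sin_ge hux
        have hgt0 : (0:ℝ) < 2/π * |t - x| := by positivity
        have hsle : |Real.sin t| ≤ 1 := Real.abs_sin_le_one t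
        have hlog_le : Real.log |Real.sin t| ≤ 0 := Real.log_nonpos (abs_nonneg _) hsle
        have hlog_ge : Real.log (2/π * |t - x|) ≤ Real.log |Real.sin t| :=
          Real.log_le_log hgt0 hge
        have hsplit : Real.log (2/π * |t - x|) = Real.log (2/π) + Real.log |t - x| :=
          Real.log_mul (by positivity) (ne_of_gt hpos)
        have h2pi : Real.log (2/π) = - Real.log (π/2) := by
          rw [← Real.log_inv]; norm_num
        have h0le : (0:ℝ) ≤ Real.log (π/2) - Real.log |t - x| := by
          have := Real.log_le_log hpos hux
          linarith
        rw [abs_of_nonpos hlog_le, abs_of_nonneg h0le]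
        linarith
    · have ho : IsOpen {t : ℝ | Real.sin t ≠ 0} := isOpen_ne.preimage Real.continuous_sin
      obtain ⟨ε, hε, hball⟩ := Metric.mem_nhds_iff.mp (ho.mem_nhds hx)
      refine ⟨Metric.closedBall x (ε/2), Metric.closedBall_mem_nhds x (by positivity), ?_⟩
      apply ContinuousOn.integrableOn_compact (isCompact_closedBall x (ε/2))
      intro t ht
      have hts : Real.sin t ≠ 0 := by
        apply hball
        rw [Metric.mem_closedBall] at ht
        rw [Metric.mem_ball]
        linarith
      have hc : ContinuousAt (fun t => Real.log |Real.sin t|) t :=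
        (Real.continuousAt_log (by simpa using hts)).comp
          ((continuous_abs.comp Real.continuous_sin).continuousAt)
      exact hc.continuousWithinAt
  exact (hloc.integrableOn_isCompact (isCompact_uIcc (a := a) (b := b))).intervalIntegrable

lemma normSq_eq (r t : ℝ) :
    Complex.normSq (1 - (r:ℂ) * Complex.exp ((2*t:ℝ) * Complex.I))
      = (1-r)^2 + 4*r*Real.sin t^2 := by
  have e1 : (Complex.exp ((2*t:ℝ) * Complex.I)).re = Real.cos (2*t) :=
    Complex.exp_ofReal_mul_I_re _
  have e2 : (Complex.exp ((2*t:ℝ) * Complex.I)).im = Real.sin (2*t) :=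
    Complex.exp_ofReal_mul_I_im _
  have hre : (1 - (r:ℂ) * Complex.exp ((2*t:ℝ) * Complex.I)).re = 1 - r * Real.cos (2*t) := by
    simp only [Complex.sub_re, Complex.one_re, Complex.mul_re, Complex.ofReal_re,
      Complex.ofReal_im, e1, e2]
    ring
  have him : (1 - (r:ℂ) * Complex.exp ((2*t:ℝ) * Complex.I)).im = -(r * Real.sin (2*t)) := by
    simp only [Complex.sub_im, Complex.one_im, Complex.mul_im, Complex.ofReal_re,
      Complex.ofReal_im, e1, e2]
    ring
  rw [Complex.normSq_apply, hre, him]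
  have hc : Real.cos (2*t) = 1 - 2 * Real.sin t ^ 2 := by
    rw [Real.cos_two_mul']
    nlinarith [Real.sin_sq_add_cos_sq t]
  have hs := Real.sin_sq_add_cos_sq (2*t)
  linear_combination r^2 * hs - 2*r*hc

lemma hasSum_re_log {r t : ℝ} (h0 : 0 ≤ r) (h1 : r < 1) :
    HasSum (fun n : ℕ => r^n * Real.cos (2*n*t) / n)
      (-Real.log (norm (1 - (r:ℂ) * Complex.exp ((2*t:ℝ) * Complex.I)))) := by
  set z : ℂ := (r:ℂ) * Complex.exp ((2*t:ℝ) * Complex.I) with hz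
  have hnorm : ‖z‖ < 1 := by
    rw [hz]
    simp only [norm_mul, Complex.norm_real, Real.norm_eq_abs, abs_of_nonneg h0]
    rw [Complex.norm_exp_ofReal_mul_I, mul_one]
    exact h1
  have H := Complex.hasSum_taylorSeries_neg_log hnorm
  have H2 := (Complex.hasSum_iff _ _).mp H |>.1
  convert H2 using 2 with n
  · have hzn : z ^ n = ((r^n : ℝ) : ℂ) * Complex.exp ((2*n*t : ℝ) * Complex.I) := by
      rw [hz, mul_pow, ← Complex.exp_nat_mul]
      push_cast
      ring_nf
    rw [hzn, div_eq_mul_inv, div_eq_mul_inv]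
    have hinv : ((n:ℂ))⁻¹ = (((n:ℝ)⁻¹ : ℝ) : ℂ) := by push_cast; ring
    rw [hinv]
    simp only [Complex.mul_re, Complex.mul_im, Complex.ofReal_re, Complex.ofReal_im,
      Complex.exp_ofReal_mul_I_re, Complex.exp_ofReal_mul_I_im, mul_zero, zero_mul,
      sub_zero, zero_add]
  · rw [Complex.neg_re, Complex.log_re]

lemma integral_cos_term (θ : ℝ) (r : ℝ) (n : ℕ) :
    ∫ t in (0:ℝ)..θ, r^n * Real.cos (2*n*t) / n
      = r^n * Real.sin (2*n*θ) / (2*(n:ℝ)^2) := by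
  rcases Nat.eq_zero_or_pos n with rfl | hn
  · simp
  · have hne : (2*(n:ℝ)) ≠ 0 := by positivity
    have hfe : (fun t => r^n * Real.cos (2*n*t) / n)
        = fun t => (r^n / n) * Real.cos (2*(n:ℝ) * t) := by
      funext t; ring
    rw [hfe, intervalIntegral.integral_const_mul,
      intervalIntegral.integral_comp_mul_left Real.cos hne, mul_zero]
    rw [integral_cos]
    have hn' : (0:ℝ) < n := by exact_mod_cast hn
    simp only [Real.sin_zero, sub_zero, smul_eq_mul]
    rw [eq_div_iff (by positivity : (2*(n:ℝ)^2) ≠ 0)]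
    field_simp

lemma step_integral (θ : ℝ) {r : ℝ} (h0 : 0 ≤ r) (h1 : r < 1) :
    HasSum (fun n : ℕ => r^n * Real.sin (2*n*θ) / (2*(n:ℝ)^2))
      (∫ t in (0:ℝ)..θ,
        -Real.log (norm (1 - (r:ℂ) * Complex.exp ((2*t:ℝ) * Complex.I)))) := by
  have Hsum := intervalIntegral.hasSum_integral_of_dominated_convergence
    (μ := volume) (a := 0) (b := θ)
    (F := fun (n : ℕ) (t : ℝ) => r^n * Real.cos (2*n*t) / n)
    (f := fun t => -Real.log (norm (1 - (r:ℂ) * Complex.exp ((2*t:ℝ) * Complex.I))))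
    (bound := fun (n : ℕ) (_ : ℝ) => r^n)
    (fun n => ((continuous_const.mul ((Real.continuous_cos.comp
        (continuous_const.mul continuous_id)))).div_const _).aestronglyMeasurable)
    (fun n => ae_of_all _ fun t _ => by
      rcases Nat.eq_zero_or_pos n with rfl | hn
      · simp
      · have h1' : |Real.cos (2*n*t)| ≤ 1 := Real.abs_cos_le_one _
        have hn1 : (1:ℝ) ≤ (n:ℝ) := by exact_mod_cast hn
        rw [Real.norm_eq_abs, abs_div, abs_mul, abs_pow, abs_of_nonneg h0,
          Nat.abs_cast]
        calc r^n * |Real.cos (2*n*t)| / n ≤ r^n * 1 / 1 := by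
              apply div_le_div₀ (by positivity) (by nlinarith [pow_nonneg h0 n]) one_pos hn1
          _ = r^n := by ring)
    (ae_of_all _ fun t _ => summable_geometric_of_lt_one h0 h1)
    (by
      have hb : IntervalIntegrable (fun _ : ℝ => (1-r)⁻¹) volume 0 θ := intervalIntegrable_const
      simpa [tsum_geometric_of_lt_one h0 h1] using hb)
    (ae_of_all _ fun t _ => hasSum_re_log h0 h1)
  have hf : (fun n : ℕ => r^n * Real.sin (2*n*θ) / (2*(n:ℝ)^2))
      = fun n : ℕ => ∫ t in (0:ℝ)..θ, r^n * Real.cos (2*n*t) / n :=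
    funext fun n => (integral_cos_term θ r n).symm
  rw [hf]
  exact Hsum

lemma log_abs_eq (r t : ℝ) :
    Real.log (norm (1 - (r:ℂ) * Complex.exp ((2*t:ℝ) * Complex.I)))
      = Real.log ((1-r)^2 + 4*r*Real.sin t^2) / 2 := by
  rw [Complex.norm_def, Real.log_sqrt (Complex.normSq_nonneg _), normSq_eq]

lemma ae_sin_ne : ∀ᵐ t : ℝ, Real.sin t ≠ 0 := by
  rw [ae_iff]
  simp only [not_not]
  refine measure_mono_null (fun t ht => ?_)
    ((Set.countable_range (fun k : ℤ => (k:ℝ)*π)).measure_zero _)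
  obtain ⟨k, hk⟩ := Real.sin_eq_zero_iff.mp ht
  exact ⟨k, hk⟩

lemma main_eq (θ : ℝ) :
    (∫ t in (0:ℝ)..θ, -Real.log |2 * Real.sin t|)
      = ∑' n : ℕ, Real.sin (2*n*θ) / (2*(n:ℝ)^2) := by
  set r : ℕ → ℝ := fun j => 1 - (1/(j+2) : ℝ) with hrdef
  have hr0 : ∀ j, 0 ≤ r j := by
    intro j
    have : (1/((j:ℝ)+2) : ℝ) ≤ 1 := by
      rw [div_le_one (by positivity)]; linarith [Nat.cast_nonneg (α := ℝ) j]
    simp only [hrdef]; linarith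
  have hrhalf : ∀ j, 1/2 ≤ r j := by
    intro j
    have h22 : (2:ℝ) ≤ (j:ℝ)+2 := by linarith [Nat.cast_nonneg (α := ℝ) j]
    have : (1/((j:ℝ)+2) : ℝ) ≤ 1/2 := one_div_le_one_div_of_le two_pos h22
    simp only [hrdef]; linarith
  have hr1 : ∀ j, r j < 1 := by
    intro j
    have : (0:ℝ) < 1/((j:ℝ)+2) := by positivity
    simp only [hrdef]; linarith
  have hrt : Tendsto r atTop (𝓝 1) := by
    have h2 : Tendsto (fun j : ℕ => (((j:ℝ)+2)⁻¹ : ℝ)) atTop (𝓝 0) :=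
      tendsto_inv_atTop_zero.comp
        (tendsto_atTop_add_const_right atTop 2 tendsto_natCast_atTop_atTop)
    have h3 := (tendsto_const_nhds (x := (1:ℝ)) (f := (atTop : Filter ℕ))).sub h2
    simpa [hrdef, one_div] using h3
  clear_value r
  -- B : integrals converge
  have hB : Tendsto (fun j => ∫ t in (0:ℝ)..θ,
      -Real.log (norm (1 - (r j :ℂ) * Complex.exp ((2*t:ℝ) * Complex.I))))
      atTop (𝓝 (∫ t in (0:ℝ)..θ, -Real.log |2 * Real.sin t|)) := by
    apply intervalIntegral.tendsto_integral_filter_of_dominated_convergence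
      (bound := fun t => Real.log 5 + Real.log 2 + 2 * |Real.log (|Real.sin t|)|)
    · -- measurability
      refine Eventually.of_forall (fun j => ?_)
      apply Continuous.aestronglyMeasurable
      apply Continuous.neg
      rw [continuous_iff_continuousAt]
      intro t
      have hne : norm (1 - (r j :ℂ) * Complex.exp ((2*t:ℝ) * Complex.I)) ≠ 0 := by
        rw [ne_eq, norm_eq_zero, sub_eq_zero]
        intro h
        have := congrArg norm h
        rw [norm_one, norm_mul, Complex.norm_real, Real.norm_eq_abs, Complex.norm_exp_ofReal_mul_I, mul_one,
          abs_of_nonneg (hr0 j)] at this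
        exact absurd this.symm (ne_of_lt (hr1 j))
      have hc1 : ContinuousAt (fun t : ℝ =>
          norm (1 - (r j :ℂ) * Complex.exp ((2*t:ℝ) * Complex.I))) t := by
        apply Continuous.continuousAt
        apply continuous_norm.comp
        apply continuous_const.sub
        apply continuous_const.mul
        apply Complex.continuous_exp.comp
        exact (Complex.continuous_ofReal.comp (continuous_const.mul continuous_id)).mul
          continuous_const
      exact hc1.log hne
    · -- bound
      refine Eventually.of_forall (fun j => ?_)
      filter_upwards [ae_sin_ne] with t hts _
      have hs2 : 0 < Real.sin t ^ 2 := by positivity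
      set E := (1 - r j)^2 + 4 * r j * Real.sin t ^ 2 with hE
      have hlb : 2 * Real.sin t ^ 2 ≤ E := by
        rw [hE]
        nlinarith [sq_nonneg (1 - r j),
          mul_nonneg (by linarith [hrhalf j] : (0:ℝ) ≤ r j - 1/2) hs2.le]
      have hub : E ≤ 5 := by
        rw [hE]
        have e1 : (1 - r j)^2 ≤ 1/4 := by nlinarith [hrhalf j, hr1 j]
        have e2 : 4 * r j * Real.sin t ^ 2 ≤ 4 := by
          nlinarith [Real.sin_sq_le_one t, hr0 j, hr1 j,
            mul_nonneg (hr0 j) (sub_nonneg.mpr (Real.sin_sq_le_one t))]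
        linarith
      have hEpos : 0 < E := lt_of_lt_of_le (by positivity) hlb
      have hup : Real.log E ≤ Real.log 5 := Real.log_le_log hEpos hub
      have hlo : Real.log (2 * Real.sin t ^ 2) ≤ Real.log E :=
        Real.log_le_log (by positivity) hlb
      have hsplit : Real.log (2 * Real.sin t ^ 2)
          = Real.log 2 + 2 * Real.log |Real.sin t| := by
        rw [Real.log_mul two_ne_zero (ne_of_gt hs2), ← Real.log_abs (Real.sin t ^ 2),
          abs_pow, Real.log_pow]
        push_cast; ring
      have h5 : (0:ℝ) ≤ Real.log 5 := Real.log_nonneg (by norm_num)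
      have h2' : (0:ℝ) ≤ Real.log 2 := Real.log_nonneg one_le_two
      rw [Real.norm_eq_abs, log_abs_eq, abs_neg, abs_div, ← hE, abs_two]
      have habs : |Real.log E| ≤ Real.log 5 + |Real.log (2 * Real.sin t ^ 2)| := by
        rw [abs_le]
        constructor
        · have h' := neg_abs_le (Real.log (2 * Real.sin t ^ 2))
          linarith
        · have h' := abs_nonneg (Real.log (2 * Real.sin t ^ 2))
          linarith
      have h2s : |Real.log (2 * Real.sin t ^ 2)|
          ≤ Real.log 2 + 2 * |Real.log (|Real.sin t|)| := by
        rw [hsplit]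
        calc |Real.log 2 + 2 * Real.log (|Real.sin t|)|
            ≤ |Real.log 2| + |2 * Real.log (|Real.sin t|)| := abs_add_le _ _
          _ = Real.log 2 + 2 * |Real.log (|Real.sin t|)| := by
              rw [abs_of_nonneg h2', abs_mul, abs_two]
      have hnn := abs_nonneg (Real.log (|Real.sin t|))
      have hnnE := abs_nonneg (Real.log E)
      linarith
    · -- bound integrable
      exact (intervalIntegrable_const.add (((ii_log_abs_sin 0 θ).abs).const_mul 2))
    · -- pointwise limit
      filter_upwards [ae_sin_ne] with t hts _
      have hs2 : 0 < Real.sin t ^ 2 := by positivity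
      have hlim : Tendsto (fun j => (1 - r j)^2 + 4 * r j * Real.sin t ^ 2)
          atTop (𝓝 (4 * Real.sin t ^ 2)) := by
        have hc : Continuous (fun x : ℝ => (1 - x)^2 + 4 * x * Real.sin t ^ 2) := by
          continuity
        have := (hc.continuousAt (x := 1)).tendsto.comp hrt
        simpa [Function.comp_def] using this
      have hlog : Tendsto (fun j => Real.log ((1 - r j)^2 + 4 * r j * Real.sin t ^ 2))
          atTop (𝓝 (Real.log (4 * Real.sin t ^ 2))) :=
        (Real.continuousAt_log (ne_of_gt (by positivity))).tendsto.comp hlim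
      have heq : -Real.log |2 * Real.sin t| = -(Real.log (4 * Real.sin t ^ 2) / 2) := by
        have : (4:ℝ) * Real.sin t ^ 2 = (2 * Real.sin t)^2 := by ring
        rw [this, ← Real.log_abs ((2*Real.sin t)^2), abs_pow, Real.log_pow]
        push_cast; ring
      rw [heq]
      simp only [log_abs_eq]
      exact (hlog.div_const 2).neg
  -- A : sums converge
  have hA : Tendsto (fun j => ∑' n : ℕ, (r j)^n * Real.sin (2*n*θ) / (2*(n:ℝ)^2))
      atTop (𝓝 (∑' n : ℕ, Real.sin (2*n*θ) / (2*(n:ℝ)^2))) := by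
    have hbs : Summable (fun n : ℕ => 1 / (n:ℝ)^2) :=
      Real.summable_one_div_nat_pow.mpr one_lt_two
    apply tendsto_tsum_of_dominated_convergence hbs
    · intro n
      rcases Nat.eq_zero_or_pos n with rfl | hn
      · simpa using tendsto_const_nhds
      · have hc : Continuous (fun x : ℝ => x^n * Real.sin (2*n*θ) / (2*(n:ℝ)^2)) := by
          continuity
        have := (hc.continuousAt (x := 1)).tendsto.comp hrt
        simpa [Function.comp_def] using this
    · refine Eventually.of_forall (fun j => fun n => ?_)
      rcases Nat.eq_zero_or_pos n with rfl | hn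
      · simp
      · have hn1 : (1:ℝ) ≤ (n:ℝ) := by exact_mod_cast hn
        rw [Real.norm_eq_abs, abs_div, abs_mul, abs_pow, abs_of_nonneg (hr0 j)]
        have hr1j := (hr1 j).le
        have : |(2*(n:ℝ)^2)| = 2*(n:ℝ)^2 := abs_of_pos (by positivity)
        rw [this, div_le_div_iff₀ (by positivity) (by positivity)]
        have hrp : (r j)^n ≤ 1 := pow_le_one₀ (hr0 j) hr1j
        have hsin : |Real.sin (2*n*θ)| ≤ 1 := Real.abs_sin_le_one _
        have hkey : r j ^ n * |Real.sin (2*n*θ)| * (n:ℝ)^2 ≤ 1 * 1 * (n:ℝ)^2 :=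
          mul_le_mul (mul_le_mul hrp hsin (abs_nonneg _) zero_le_one) le_rfl
            (sq_nonneg _) (by norm_num)
        nlinarith [sq_nonneg ((n:ℝ))]
  -- combine
  have hSI : ∀ j, (∑' n : ℕ, (r j)^n * Real.sin (2*n*θ) / (2*(n:ℝ)^2))
      = ∫ t in (0:ℝ)..θ,
        -Real.log (norm (1 - (r j :ℂ) * Complex.exp ((2*t:ℝ) * Complex.I))) :=
    fun j => (step_integral θ (hr0 j) (hr1 j)).tsum_eq
  rw [show (fun j => ∑' n : ℕ, (r j)^n * Real.sin (2*n*θ) / (2*(n:ℝ)^2))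
    = (fun j => ∫ t in (0:ℝ)..θ,
        -Real.log (norm (1 - (r j :ℂ) * Complex.exp ((2*t:ℝ) * Complex.I))))
    from funext hSI] at hA
  exact tendsto_nhds_unique hB hA

/-- Fourier expansion of the Lobachevsky function:
`𝔏(θ) = -∫_0^θ log|2 sin t| dt = (1/2) ∑_{n≥1} sin(2nθ)/n²`,
the series converging absolutely. -/
theorem lobachevsky_fourier_series (θ : ℝ) :
    (Summable fun n : ℕ+ => |Real.sin (2 * (n : ℝ) * θ) / (n : ℝ) ^ 2|) ∧
    -∫ t in (0 : ℝ)..θ, Real.log |2 * Real.sin t| =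
      (1 / 2) * ∑' n : ℕ+, Real.sin (2 * (n : ℝ) * θ) / (n : ℝ) ^ 2 := by
  have hbs : Summable (fun n : ℕ => 1 / (n:ℝ)^2) :=
    Real.summable_one_div_nat_pow.mpr one_lt_two
  have hbs1 : Summable (fun m : ℕ => 1 / ((m:ℝ)+1)^2) := by
    have := (summable_nat_add_iff 1).mpr hbs
    simpa using this
  have hcoe : ∀ m : ℕ, ((m.succPNat : ℕ+) : ℝ) = (m:ℝ) + 1 := by
    intro m
    have h1 : ((m.succPNat : ℕ+) : ℕ) = m + 1 := Nat.succPNat_coe m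
    exact_mod_cast congrArg (Nat.cast : ℕ → ℝ) h1
  constructor
  · rw [← Equiv.pnatEquivNat.symm.summable_iff]
    apply Summable.of_nonneg_of_le (fun m => abs_nonneg _) ?_ hbs1
    intro m
    simp only [Function.comp_apply, Equiv.pnatEquivNat_symm_apply]
    rw [hcoe, abs_div, abs_of_nonneg (by positivity : (0:ℝ) ≤ ((m:ℝ)+1)^2)]
    gcongr
    · exact Real.abs_sin_le_one _
  · set g : ℕ → ℝ := fun n => Real.sin (2*n*θ) / (2*(n:ℝ)^2) with hg
    have hgs : Summable g := by
      apply Summable.of_norm_bounded hbs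
      intro n
      rcases Nat.eq_zero_or_pos n with rfl | hn
      · simp [hg]
      · have hn1 : (1:ℝ) ≤ (n:ℝ) := by exact_mod_cast hn
        rw [hg, Real.norm_eq_abs, abs_div, abs_of_nonneg (by positivity : (0:ℝ) ≤ 2*(n:ℝ)^2)]
        have : |Real.sin (2*n*θ)| ≤ 1 := Real.abs_sin_le_one _
        rw [div_le_div_iff₀ (by positivity) (by positivity)]
        nlinarith [sq_nonneg ((n:ℝ))]
    rw [← intervalIntegral.integral_neg, main_eq θ]
    rw [← tsum_mul_left]
    rw [← (Equiv.pnatEquivNat.symm.tsum_eq (fun n : ℕ+ =>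
      (1/2 : ℝ) * (Real.sin (2 * (n:ℝ) * θ) / (n:ℝ)^2)))]
    rw [Summable.tsum_eq_zero_add hgs]
    have h0 : g 0 = 0 := by simp [hg]
    rw [h0, zero_add]
    congr 1
    funext m
    simp only [hg, Equiv.pnatEquivNat_symm_apply, hcoe]
    push_cast
    field_simp
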